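/- Let 𝒢_n be a simple, verbose ψ-reduction grammar. Then for each production G_n → χ[σ_1]⋯[σ_w] in 𝒢_n whose right-hand side has closure width w, every ground term δ ∈ L(χ[σ_1]⋯[σ_w]) also has closure width w. -/

import Mathlib

mutual
/-- λυ-terms in de Bruijn notation, with explicit closures. -/
inductive LTerm : Type
  | idx : Nat → LTerm
  | lam : LTerm → LTerm
  | app : LTerm → LTerm → LTerm
  | clos : LTerm → LSub → LTerm
  deriving DecidableEq

/-- explicit λυ-substitutions. -/
inductive LSub : Type
  | slash : LTerm → LSub
  | lift : LSub → LSub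
  | shift : LSub
  deriving DecidableEq
end

mutual
/-- natural size of a λυ-term: the number of constructors (|idx n| = n+1). -/
def LTerm.size : LTerm → Nat
  | .idx n => n + 1
  | .lam a => 1 + a.size
  | .app a b => 1 + a.size + b.size
  | .clos a s => 1 + a.size + s.size

/-- natural size of a substitution. -/
def LSub.size : LSub → Nat
  | .slash a => 1 + a.size
  | .lift s => 1 + s.size
  | .shift => 1
end

/-- a λυ-term is pure if it contains no closure; pure terms are exactly the ψ-normal forms. -/
def LTerm.IsPure : LTerm → Prop
  | .idx _ => True
  | .lam a => a.IsPure
  | .app a b => a.IsPure ∧ b.IsPure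
  | .clos _ _ => False

/-- one normal-order (leftmost-outermost) ψ-reduction step. -/
inductive NStep : LTerm → LTerm → Prop
  /-- (App) (ab)[s] → a[s](b[s]) -/
  | appS (a b : LTerm) (s : LSub) :
      NStep (.clos (.app a b) s) (.app (.clos a s) (.clos b s))
  /-- (Lambda) (λa)[s] → λ(a[⇑(s)]) -/
  | lamS (a : LTerm) (s : LSub) :
      NStep (.clos (.lam a) s) (.lam (.clos a (.lift s)))
  /-- (FVar) 0[a/] → a -/
  | fvar (a : LTerm) : NStep (.clos (.idx 0) (.slash a)) a
  /-- (RVar) (S n)[a/] → n -/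
  | rvar (n : Nat) (a : LTerm) : NStep (.clos (.idx (n+1)) (.slash a)) (.idx n)
  /-- (FVarLift) 0[⇑(s)] → 0 -/
  | fvarLift (s : LSub) : NStep (.clos (.idx 0) (.lift s)) (.idx 0)
  /-- (RVarLift) (S n)[⇑(s)] → n[s][↑] -/
  | rvarLift (n : Nat) (s : LSub) :
      NStep (.clos (.idx (n+1)) (.lift s)) (.clos (.clos (.idx n) s) .shift)
  /-- (VarShift) n[↑] → S n -/
  | varShift (n : Nat) : NStep (.clos (.idx n) .shift) (.idx (n+1))
  /-- reduce under an abstraction -/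
  | lamCong {a a' : LTerm} : NStep a a' → NStep (.lam a) (.lam a')
  /-- reduce in the left part of an application -/
  | appLeft {a a' : LTerm} (b : LTerm) : NStep a a' → NStep (.app a b) (.app a' b)
  /-- reduce in the right part of an application, provided the left part is normal -/
  | appRight {b b' : LTerm} (a : LTerm) :
      a.IsPure → NStep b b' → NStep (.app a b) (.app a b')
  /-- reduce in the body of a closure, provided the closure is not itself a ψ-redex,
      i.e. its body is again a closure -/
  | closCong {t t' : LTerm} (s : LSub) :
      (∃ u v, t = LTerm.clos u v) → NStep t t' → NStep (.clos t s) (.clos t' s)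

/-- `NormIn t k` : `t` reaches its ψ-normal form in exactly `k` normal-order
ψ-reduction steps (written t ↓_k). -/
inductive NormIn : LTerm → Nat → Prop
  | base {t : LTerm} : t.IsPure → NormIn t 0
  | step {t t' : LTerm} {k : Nat} : NStep t t' → NormIn t' k → NormIn t (k+1)

/-! ## Regular tree grammars over the λυ signature -/

/-- terms over the ranked alphabet of λυ (terminal symbols 0, S, λ, application,
closure, slash, lift, shift) with variables (non-terminals) in `V`.
Ground terms are `GTerm Empty`. -/
inductive GTerm (V : Type) : Type
  | var : V → GTerm V
  | zero : GTerm V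
  | succ : GTerm V → GTerm V
  | lam : GTerm V → GTerm V
  | app : GTerm V → GTerm V → GTerm V
  | clos : GTerm V → GTerm V → GTerm V
  | slash : GTerm V → GTerm V
  | lift : GTerm V → GTerm V
  | shift : GTerm V
  deriving DecidableEq

/-- `Gen P α t` : the ground term `t` is derivable from the term `α` in the
regular tree grammar with production function `P`. -/
inductive Gen {V : Type} (P : V → Set (GTerm V)) : GTerm V → GTerm Empty → Prop
  | var {X : V} {γ : GTerm V} {t : GTerm Empty} :
      γ ∈ P X → Gen P γ t → Gen P (.var X) t
  | zero : Gen P .zero .zero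
  | succ {a t} : Gen P a t → Gen P (.succ a) (.succ t)
  | lam {a t} : Gen P a t → Gen P (.lam a) (.lam t)
  | app {a b t u} : Gen P a t → Gen P b u → Gen P (.app a b) (.app t u)
  | clos {a b t u} : Gen P a t → Gen P b u → Gen P (.clos a b) (.clos t u)
  | slash {a t} : Gen P a t → Gen P (.slash a) (.slash t)
  | lift {a t} : Gen P a t → Gen P (.lift a) (.lift t)
  | shift : Gen P .shift .shift

/-- the language generated by a term `α` in the grammar with productions `P`. -/
def Lang {V : Type} (P : V → Set (GTerm V)) (α : GTerm V) : Set (GTerm Empty) :=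
  {t | Gen P α t}

/-- derivations (parse trees) of a ground term from a term `α`; a grammar is
unambiguous when such derivations are unique. -/
inductive Parse {V : Type} (P : V → Set (GTerm V)) : GTerm V → GTerm Empty → Type
  | var {X : V} {γ : GTerm V} {t : GTerm Empty} :
      γ ∈ P X → Parse P γ t → Parse P (.var X) t
  | zero : Parse P .zero .zero
  | succ {a t} : Parse P a t → Parse P (.succ a) (.succ t)
  | lam {a t} : Parse P a t → Parse P (.lam a) (.lam t)
  | app {a b t u} : Parse P a t → Parse P b u → Parse P (.app a b) (.app t u)
  | clos {a b t u} : Parse P a t → Parse P b u → Parse P (.clos a b) (.clos t u)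
  | slash {a t} : Parse P a t → Parse P (.slash a) (.slash t)
  | lift {a t} : Parse P a t → Parse P (.lift a) (.lift t)
  | shift : Parse P .shift .shift

/-- a non-terminal `X` is unambiguous if every ground term admits at most one
derivation sequence (equivalently, parse tree) from `X`. -/
def Unambiguous {V : Type} (P : V → Set (GTerm V)) (X : V) : Prop :=
  ∀ t : GTerm Empty, Subsingleton (Parse P (.var X) t)

/-- `Occurs X α` : the non-terminal `X` occurs in the term `α`. -/
def Occurs {V : Type} (X : V) : GTerm V → Prop
  | .var Y => X = Y
  | .zero => False
  | .succ a => Occurs X a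
  | .lam a => Occurs X a
  | .app a b => Occurs X a ∨ Occurs X b
  | .clos a b => Occurs X a ∨ Occurs X b
  | .slash a => Occurs X a
  | .lift a => Occurs X a
  | .shift => False

/-- the head of a term `χ[σ_1]⋯[σ_w]` of closure width `w`, namely `χ`. -/
def headOf {V : Type} : GTerm V → GTerm V
  | .clos a _ => headOf a
  | t => t

/-- the closure width of a term: the largest `w` such that the term has the
form `χ[σ_1]⋯[σ_w]`. -/
def closWidth {V : Type} : GTerm V → Nat
  | .clos a _ => closWidth a + 1
  | _ => 0

/-- a regular tree grammar over the λυ terminal alphabet, with non-terminals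
`V`, axiom `ax` and a finite set of productions for each non-terminal. -/
structure RTG (V : Type) where
  ax : V
  prods : V → Set (GTerm V)
  prods_fin : ∀ X, (prods X).Finite

/-- non-terminal symbols of the ψ-reduction grammar 𝒢_n : the standard
non-terminals T, S, N of the grammar Λ of λυ-terms, plus G_0, …, G_n. -/
inductive NT (n : Nat) : Type
  | T : NT n
  | S : NT n
  | N : NT n
  | G : Fin (n+1) → NT n
  deriving DecidableEq

/-- the productions of the standard regular tree grammar Λ of λυ-terms:
T → N | λT | T T | T[S],  S → T/ | ⇑(S) | ↑,  N → 0 | S N. -/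
def lamProds {n : Nat} : NT n → Set (GTerm (NT n))
  | .T => {GTerm.var (NT.N), GTerm.lam (.var .T), GTerm.app (.var .T) (.var .T),
           GTerm.clos (.var .T) (.var .S)}
  | .S => {GTerm.slash (.var .T), GTerm.lift (.var .S), GTerm.shift}
  | .N => {GTerm.zero, GTerm.succ (.var .N)}
  | .G _ => ∅

/-- encoding of de Bruijn indices as ground terms. -/
def encIdx : Nat → GTerm Empty
  | 0 => .zero
  | n+1 => .succ (encIdx n)

mutual
/-- encoding of λυ-terms as ground terms over the λυ alphabet. -/
def encT : LTerm → GTerm Empty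
  | .idx n => encIdx n
  | .lam a => .lam (encT a)
  | .app a b => .app (encT a) (encT b)
  | .clos a s => .clos (encT a) (encS s)

/-- encoding of λυ-substitutions as ground terms over the λυ alphabet. -/
def encS : LSub → GTerm Empty
  | .slash a => .slash (encT a)
  | .lift s => .lift (encS s)
  | .shift => .shift
end

/-- `IsRG n G` : `G` is a ψ-reduction grammar 𝒢_n : a regular tree grammar
over the λυ alphabet with non-terminals T, S, N, G_0, …, G_n, whose axiom is
G_n, whose productions include those of the grammar Λ of λυ-terms, and such
that each G_k is unambiguous and generates exactly the (encodings of) λυ-terms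
ψ-normalising in k normal-order ψ-reduction steps. -/
structure IsRG (n : Nat) (G : RTG (NT n)) : Prop where
  ax_eq : G.ax = NT.G (Fin.last n)
  lambda_sub : ∀ X : NT n, lamProds X ⊆ G.prods X
  unamb : ∀ k : Fin (n+1), Unambiguous G.prods (NT.G k)
  lang : ∀ k : Fin (n+1),
    Lang G.prods (.var (NT.G k)) = {g | ∃ t : LTerm, NormIn t k ∧ encT t = g}

/-- `IsSimple n G` : the ψ-reduction grammar is simple: every self-referencing
production is a production of Λ or has one of the forms
G_k → λG_k | G_0 G_k | G_k G_0, and every regular (non-self-referencing)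
production G_k → α references only the non-terminals T, S, N, G_0, …, G_{k−1}. -/
structure IsSimple (n : Nat) (G : RTG (NT n)) : Prop where
  selfref : ∀ (X : NT n) (α : GTerm (NT n)), α ∈ G.prods X → Occurs X α →
    α ∈ lamProds X ∨
      ∃ k : Fin (n+1), X = NT.G k ∧
        (α = .lam (.var X) ∨ α = .app (.var (NT.G 0)) (.var X) ∨
          α = .app (.var X) (.var (NT.G 0)))
  regular : ∀ (k : Fin (n+1)) (α : GTerm (NT n)),
    α ∈ G.prods (NT.G k) → ¬ Occurs (NT.G k) α →
      ∀ Y : NT n, Occurs Y α →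
        Y = NT.T ∨ Y = NT.S ∨ Y = NT.N ∨ ∃ j : Fin (n+1), Y = NT.G j ∧ (j : ℕ) < (k : ℕ)

/-- `IsVerbose G` : no production has the form X → G_k[σ_1]⋯[σ_w]. -/
def IsVerbose {n : Nat} (G : RTG (NT n)) : Prop :=
  ∀ (X : NT n) (α : GTerm (NT n)), α ∈ G.prods X →
    ∀ k : Fin (n+1), headOf α ≠ .var (NT.G k)


/-! ### Auxiliary machinery -/

/-- iterated closure on grammar terms (innermost substitution first). -/
def gclos {V : Type} (h : GTerm V) : List (GTerm V) → GTerm V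
  | [] => h
  | s :: l => gclos (.clos h s) l

/-- iterated closure on λυ-terms. -/
def lclos (t : LTerm) : List LSub → LTerm
  | [] => t
  | u :: l => lclos (.clos t u) l

@[simp] theorem headOf_clos {V : Type} (a b : GTerm V) : headOf (.clos a b) = headOf a := rfl
@[simp] theorem headOf_shift {V : Type} : headOf (.shift : GTerm V) = .shift := rfl
@[simp] theorem headOf_succ {V : Type} (a : GTerm V) : headOf (.succ a) = .succ a := rfl
@[simp] theorem headOf_lam {V : Type} (a : GTerm V) : headOf (.lam a) = .lam a := rfl
@[simp] theorem headOf_app {V : Type} (a b : GTerm V) : headOf (.app a b) = .app a b := rfl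
@[simp] theorem headOf_zero {V : Type} : headOf (.zero : GTerm V) = .zero := rfl
@[simp] theorem headOf_var {V : Type} (x : V) : headOf (.var x : GTerm V) = .var x := rfl
@[simp] theorem headOf_slash {V : Type} (a : GTerm V) : headOf (.slash a) = .slash a := rfl
@[simp] theorem headOf_lift {V : Type} (a : GTerm V) : headOf (.lift a) = .lift a := rfl

@[simp] theorem closWidth_clos {V : Type} (a b : GTerm V) :
    closWidth (.clos a b) = closWidth a + 1 := rfl
@[simp] theorem closWidth_var {V : Type} (x : V) : closWidth (.var x : GTerm V) = 0 := rfl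
@[simp] theorem closWidth_zero {V : Type} : closWidth (.zero : GTerm V) = 0 := rfl
@[simp] theorem closWidth_succ {V : Type} (a : GTerm V) : closWidth (.succ a) = 0 := rfl
@[simp] theorem closWidth_lam {V : Type} (a : GTerm V) : closWidth (.lam a) = 0 := rfl
@[simp] theorem closWidth_app {V : Type} (a b : GTerm V) : closWidth (.app a b) = 0 := rfl
@[simp] theorem closWidth_slash {V : Type} (a : GTerm V) : closWidth (.slash a) = 0 := rfl
@[simp] theorem closWidth_lift {V : Type} (a : GTerm V) : closWidth (.lift a) = 0 := rfl
@[simp] theorem closWidth_shift {V : Type} : closWidth (.shift : GTerm V) = 0 := rfl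

theorem gclos_append {V : Type} :
    ∀ (l₁ l₂ : List (GTerm V)) (h : GTerm V), gclos h (l₁ ++ l₂) = gclos (gclos h l₁) l₂
  | [], _, _ => rfl
  | s :: l, l₂, h => gclos_append l l₂ (.clos h s)

theorem lclos_append :
    ∀ (l₁ l₂ : List LSub) (t : LTerm), lclos t (l₁ ++ l₂) = lclos (lclos t l₁) l₂
  | [], _, _ => rfl
  | s :: l, l₂, t => lclos_append l l₂ (.clos t s)

theorem closWidth_gclos {V : Type} :
    ∀ (l : List (GTerm V)) (h : GTerm V), closWidth (gclos h l) = closWidth h + l.length := by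
  intro l
  induction l with
  | nil => intro h; rfl
  | cons s l ih =>
    intro h
    rw [show gclos h (s :: l) = gclos (.clos h s) l from rfl, ih, closWidth_clos,
      List.length_cons]
    omega

theorem headOf_gclos {V : Type} :
    ∀ (l : List (GTerm V)) (h : GTerm V), headOf (gclos h l) = headOf h := by
  intro l
  induction l with
  | nil => intro h; rfl
  | cons s l ih =>
    intro h
    rw [show gclos h (s :: l) = gclos (.clos h s) l from rfl, ih, headOf_clos]

theorem spine_exists {V : Type} :
    ∀ γ : GTerm V, ∃ (χ : GTerm V) (l : List (GTerm V)),
      γ = gclos χ l ∧ l.length = closWidth γ ∧ headOf γ = χ ∧ closWidth χ = 0 := by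
  intro γ
  induction γ with
  | clos a b iha ihb =>
    obtain ⟨χ, l, h1, h2, h3, h4⟩ := iha
    refine ⟨χ, l ++ [b], ?_, ?_, ?_, h4⟩
    · rw [gclos_append, ← h1]; rfl
    · simp [h2]
    · rw [headOf_clos, h3]
  | var x => exact ⟨_, [], rfl, rfl, rfl, rfl⟩
  | zero => exact ⟨_, [], rfl, rfl, rfl, rfl⟩
  | succ a ih => exact ⟨_, [], rfl, rfl, rfl, rfl⟩
  | lam a ih => exact ⟨_, [], rfl, rfl, rfl, rfl⟩
  | app a b iha ihb => exact ⟨_, [], rfl, rfl, rfl, rfl⟩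
  | slash a ih => exact ⟨_, [], rfl, rfl, rfl, rfl⟩
  | lift a ih => exact ⟨_, [], rfl, rfl, rfl, rfl⟩
  | shift => exact ⟨_, [], rfl, rfl, rfl, rfl⟩

theorem gen_gclos_inv {V : Type} (P : V → Set (GTerm V)) :
    ∀ (σs : List (GTerm V)) (χ : GTerm V) (δ : GTerm Empty),
      Gen P (gclos χ σs) δ →
      ∃ (h : GTerm Empty) (τs : List (GTerm Empty)),
        δ = gclos h τs ∧ Gen P χ h ∧ List.Forall₂ (Gen P) σs τs := by
  intro σs
  induction σs with
  | nil => intro χ δ hg; exact ⟨δ, [], rfl, hg, .nil⟩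
  | cons s l ih =>
    intro χ δ hg
    obtain ⟨h', τs, rfl, hχ, hfa⟩ := ih (.clos χ s) δ hg
    cases hχ with
    | clos h1 h2 => exact ⟨_, _ :: τs, rfl, h1, .cons h2 hfa⟩

theorem gen_gclos {V : Type} {P : V → Set (GTerm V)} :
    ∀ {σs : List (GTerm V)} {τs : List (GTerm Empty)} {χ : GTerm V} {h : GTerm Empty},
      Gen P χ h → List.Forall₂ (Gen P) σs τs → Gen P (gclos χ σs) (gclos h τs) := by
  intro σs τs χ h hg hfa
  induction hfa generalizing χ h with
  | nil => exact hg
  | cons hst _ ih => exact ih (.clos hg hst)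

theorem headOf_encT : ∀ t : LTerm,
    (∃ m, headOf (encT t) = encIdx m) ∨ (∃ a, headOf (encT t) = .lam a) ∨
      (∃ a b, headOf (encT t) = .app a b)
  | .idx m => Or.inl ⟨m, by cases m <;> simp [encT, encIdx]⟩
  | .lam a => Or.inr (Or.inl ⟨encT a, by simp [encT]⟩)
  | .app a b => Or.inr (Or.inr ⟨encT a, encT b, by simp [encT]⟩)
  | .clos a s => by
    have h := headOf_encT a
    rw [show encT (LTerm.clos a s) = GTerm.clos (encT a) (encS s) by simp [encT], headOf_clos]
    exact h

theorem enc_spine : ∀ (τs : List (GTerm Empty)) (h : GTerm Empty) (d : LTerm),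
    encT d = gclos h τs →
    ∃ (t : LTerm) (us : List LSub), d = lclos t us ∧ encT t = h ∧ τs = us.map encS := by
  intro τs
  induction τs using List.reverseRecOn with
  | nil => intro h d hd; exact ⟨d, [], rfl, hd, rfl⟩
  | append_singleton l s ih =>
    intro h d hd
    rw [gclos_append, show gclos (gclos h l) [s] = GTerm.clos (gclos h l) s from rfl] at hd
    cases d with
    | idx m => cases m <;> simp [encT, encIdx] at hd
    | lam a => simp [encT] at hd
    | app a b => simp [encT] at hd
    | clos a u =>
      simp only [encT, GTerm.clos.injEq] at hd
      obtain ⟨hd1, hd2⟩ := hd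
      obtain ⟨t, us, rfl, ht, hτ⟩ := ih h a hd1
      refine ⟨t, us ++ [u], ?_, ht, ?_⟩
      · rw [lclos_append]; rfl
      · simp [hτ, hd2]

theorem encT_eq_zero : ∀ t : LTerm, encT t = .zero → t = .idx 0 := by
  intro t
  cases t with
  | idx m => cases m with
    | zero => intro _; rfl
    | succ m => intro h; simp [encT, encIdx] at h
  | lam a => intro h; simp [encT] at h
  | app a b => intro h; simp [encT] at h
  | clos a s => intro h; simp [encT] at h

theorem encT_eq_lam_zero : ∀ t : LTerm, encT t = .lam .zero → t = .lam (.idx 0) := by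
  intro t
  cases t with
  | idx m => cases m <;> intro h <;> simp [encT, encIdx] at h
  | lam a =>
    intro h
    simp only [encT, GTerm.lam.injEq] at h
    rw [encT_eq_zero a h]
  | app a b => intro h; simp [encT] at h
  | clos a s => intro h; simp [encT] at h

theorem encT_eq_lam_lam_zero :
    ∀ t : LTerm, encT t = .lam (.lam .zero) → t = .lam (.lam (.idx 0)) := by
  intro t
  cases t with
  | idx m => cases m <;> intro h <;> simp [encT, encIdx] at h
  | lam a =>
    intro h
    simp only [encT, GTerm.lam.injEq] at h
    rw [encT_eq_lam_zero a h]
  | app a b => intro h; simp [encT] at h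
  | clos a s => intro h; simp [encT] at h

theorem pure_no_step : ∀ {t t' : LTerm}, NStep t t' → t.IsPure → False := by
  intro t t' h
  induction h with
  | appS a b s => intro hp; simp [LTerm.IsPure] at hp
  | lamS a s => intro hp; simp [LTerm.IsPure] at hp
  | fvar a => intro hp; simp [LTerm.IsPure] at hp
  | rvar m a => intro hp; simp [LTerm.IsPure] at hp
  | fvarLift s => intro hp; simp [LTerm.IsPure] at hp
  | rvarLift m s => intro hp; simp [LTerm.IsPure] at hp
  | varShift m => intro hp; simp [LTerm.IsPure] at hp
  | lamCong h ih => intro hp; exact ih (by simpa [LTerm.IsPure] using hp)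
  | appLeft b h ih =>
    intro hp
    simp only [LTerm.IsPure] at hp
    exact ih hp.1
  | appRight a hp' h ih =>
    intro hp
    simp only [LTerm.IsPure] at hp
    exact ih hp.2
  | closCong s hex h ih => intro hp; simp [LTerm.IsPure] at hp

theorem nstep_det : ∀ {t a b : LTerm}, NStep t a → NStep t b → a = b := by
  intro t a b h1
  induction h1 generalizing b with
  | appS x y s =>
    intro h2
    cases h2 with
    | appS => rfl
    | closCong _ hex _ => obtain ⟨u, v, huv⟩ := hex; simp at huv
  | lamS x s =>
    intro h2
    cases h2 with
    | lamS => rfl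
    | closCong _ hex _ => obtain ⟨u, v, huv⟩ := hex; simp at huv
  | fvar x =>
    intro h2
    cases h2 with
    | fvar => rfl
    | closCong _ hex _ => obtain ⟨u, v, huv⟩ := hex; simp at huv
  | rvar m x =>
    intro h2
    cases h2 with
    | rvar => rfl
    | closCong _ hex _ => obtain ⟨u, v, huv⟩ := hex; simp at huv
  | fvarLift s =>
    intro h2
    cases h2 with
    | fvarLift => rfl
    | closCong _ hex _ => obtain ⟨u, v, huv⟩ := hex; simp at huv
  | rvarLift m s =>
    intro h2
    cases h2 with
    | rvarLift => rfl
    | closCong _ hex _ => obtain ⟨u, v, huv⟩ := hex; simp at huv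
  | varShift m =>
    intro h2
    cases h2 with
    | varShift => rfl
    | closCong _ hex _ => obtain ⟨u, v, huv⟩ := hex; simp at huv
  | lamCong h ih =>
    intro h2
    cases h2 with
    | lamCong h' => rw [ih h']
  | appLeft y h ih =>
    intro h2
    cases h2 with
    | appLeft _ h' => rw [ih h']
    | appRight _ hp h' => exact absurd hp (fun hp => pure_no_step h hp)
  | appRight x hp h ih =>
    intro h2
    cases h2 with
    | appLeft _ h' => exact absurd hp (fun hp => pure_no_step h' hp)
    | appRight _ _ h' => rw [ih h']
  | closCong s hex h ih =>
    intro h2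
    obtain ⟨u, v, rfl⟩ := hex
    cases h2 with
    | closCong _ _ h' => rw [ih h']

theorem normIn_uniq : ∀ {t : LTerm} {j k : Nat}, NormIn t j → NormIn t k → j = k := by
  intro t j k h1
  induction h1 generalizing k with
  | base hp =>
    intro h2
    cases h2 with
    | base => rfl
    | step hs _ => exact (pure_no_step hs hp).elim
  | step hs h ih =>
    intro h2
    cases h2 with
    | base hp => exact (pure_no_step hs hp).elim
    | step hs' h' =>
      cases nstep_det hs hs'
      rw [ih h']

theorem nstep_spine : ∀ (l : List LSub) {x : LTerm} {s : LSub} {y : LTerm},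
    NStep (.clos x s) y → NStep (lclos (.clos x s) l) (lclos y l)
  | [], _, _, _, h => h
  | u :: l, x, s, y, h => nstep_spine l (NStep.closCong u ⟨x, s, rfl⟩ h)

theorem normIn_lam : ∀ {a : LTerm} {k : Nat}, NormIn a k → NormIn (.lam a) k := by
  intro a k h
  induction h with
  | base hp => exact .base (by simpa [LTerm.IsPure] using hp)
  | step hs _ ih => exact .step (.lamCong hs) ih

theorem normIn_lclos_lam : ∀ (us : List LSub) (a : LTerm) (k : Nat),
    NormIn (lclos a (us.map LSub.lift)) k → NormIn (lclos (.lam a) us) (us.length + k) := by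
  intro us
  induction us with
  | nil => intro a k h; simpa [lclos] using normIn_lam h
  | cons u l ih =>
    intro a k h
    have hstep : NStep (lclos (.lam a) (u :: l)) (lclos (.lam (.clos a (.lift u))) l) :=
      nstep_spine l (NStep.lamS a u)
    have ihh := ih (.clos a (.lift u)) k h
    have hh := NormIn.step hstep ihh
    have harr : (u :: l).length + k = l.length + k + 1 := by
      rw [List.length_cons]; omega
    rw [harr]
    exact hh

theorem normIn_idx0_lifts : ∀ ls : List LSub, NormIn (lclos (.idx 0) (ls.map LSub.lift)) ls.length
  | [] => .base (by simp [LTerm.IsPure, lclos])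
  | u :: l => .step (nstep_spine (l.map LSub.lift) (NStep.fvarLift u)) (normIn_idx0_lifts l)

theorem normIn_lam0 (us : List LSub) :
    NormIn (lclos (.lam (.idx 0)) us) (us.length + us.length) :=
  normIn_lclos_lam us _ _ (normIn_idx0_lifts us)

theorem normIn_lamlam0 (us : List LSub) :
    NormIn (lclos (.lam (.lam (.idx 0))) us) (us.length + (us.length + us.length)) := by
  have h := normIn_lam0 (us.map LSub.lift)
  have hh := normIn_lclos_lam us (.lam (.idx 0)) ((us.map LSub.lift).length + (us.map LSub.lift).length) h
  simpa using hh


/-- Let 𝒢_n be a simple, verbose ψ-reduction grammar. Then for each production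
G_n → χ[σ_1]⋯[σ_w] whose right-hand side has closure width w, every ground
term δ ∈ L(χ[σ_1]⋯[σ_w]) also has closure width w. -/
theorem productions_preserve_closure_width (n : Nat) (G : RTG (NT n))
    (hRG : IsRG n G) (hSimple : IsSimple n G) (hVerbose : IsVerbose G)
    (γ : GTerm (NT n)) (hγ : γ ∈ G.prods (NT.G (Fin.last n)))
    (δ : GTerm Empty) (hδ : δ ∈ Lang G.prods γ) :
    closWidth δ = closWidth γ := by
  classical
  obtain ⟨χ, σs, hγeq, hσlen, hχ, hwχ⟩ := spine_exists γ
  have hδ' : Gen G.prods (gclos χ σs) δ := hγeq ▸ hδ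
  obtain ⟨hd0, τs, rfl, hgenh, hf⟩ := gen_gclos_inv G.prods σs χ δ hδ'
  have hlen : σs.length = τs.length := hf.length_eq
  have hsub : ∀ δ' : GTerm Empty, Gen G.prods (gclos χ σs) δ' →
      ∃ d : LTerm, NormIn d n ∧ encT d = δ' := by
    intro δ' hg
    have hmem : δ' ∈ Lang G.prods (.var (NT.G (Fin.last n))) :=
      Gen.var (hγeq ▸ hγ) hg
    rw [hRG.lang] at hmem
    obtain ⟨d, hdn, hde⟩ := hmem
    exact ⟨d, by simpa using hdn, hde⟩
  suffices h0 : closWidth hd0 = 0 by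
    rw [closWidth_gclos, h0, hγeq, closWidth_gclos, hwχ]
    omega
  cases hd0 <;> try rfl
  rename_i β τ₀
  exfalso
  cases hgenh with
  | clos h1 h2 => simp at hwχ
  | @var X γ' _ hmem hg' =>
    cases X with
    | G k => exact hVerbose _ γ hγ k hχ
    | T =>
      have m1 : (GTerm.var NT.N : GTerm (NT n)) ∈ G.prods NT.T :=
        hRG.lambda_sub _ (by simp [lamProds])
      have m2 : (GTerm.lam (.var .T) : GTerm (NT n)) ∈ G.prods NT.T :=
        hRG.lambda_sub _ (by simp [lamProds])
      have m3 : (GTerm.clos (.var .T) (.var .S) : GTerm (NT n)) ∈ G.prods NT.T :=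
        hRG.lambda_sub _ (by simp [lamProds])
      have m4 : (GTerm.zero : GTerm (NT n)) ∈ G.prods NT.N :=
        hRG.lambda_sub _ (by simp [lamProds])
      have m5 : (GTerm.shift : GTerm (NT n)) ∈ G.prods NT.S :=
        hRG.lambda_sub _ (by simp [lamProds])
      have g1 : Gen G.prods (.var NT.T) (.lam .zero) :=
        .var m2 (.lam (.var m1 (.var m4 .zero)))
      have g2 : Gen G.prods (.var NT.T) (.clos (.lam (.lam .zero)) .shift) :=
        .var m3 (.clos (.var m2 (.lam g1)) (.var m5 .shift))
      obtain ⟨dA, hAn, hAe⟩ := hsub _ (gen_gclos g1 hf)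
      obtain ⟨dB, hBn, hBe⟩ := hsub _ (gen_gclos g2 hf)
      obtain ⟨tA, usA, rfl, htA, hτA⟩ := enc_spine τs (.lam .zero) dA hAe
      obtain ⟨tB, usB, rfl, htB, hτB⟩ :=
        enc_spine (GTerm.shift :: τs) (.lam (.lam .zero)) dB hBe
      have htA' : tA = .lam (.idx 0) := encT_eq_lam_zero _ htA
      have htB' : tB = .lam (.lam (.idx 0)) := encT_eq_lam_lam_zero _ htB
      subst htA'
      subst htB'
      have e1 := normIn_uniq hAn (normIn_lam0 usA)
      have e2 := normIn_uniq hBn (normIn_lamlam0 usB)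
      have l1 : τs.length = usA.length := by rw [hτA]; simp
      have l2 : τs.length + 1 = usB.length := by
        have := congrArg List.length hτB
        simpa using this
      omega
    | S =>
      have m5 : (GTerm.shift : GTerm (NT n)) ∈ G.prods NT.S :=
        hRG.lambda_sub _ (by simp [lamProds])
      obtain ⟨d, hdn, hde⟩ := hsub _ (gen_gclos (Gen.var m5 Gen.shift) hf)
      have hh := headOf_encT d
      rw [hde, headOf_gclos, headOf_shift] at hh
      rcases hh with ⟨m, hm⟩ | ⟨a, ha⟩ | ⟨a, b, hab⟩
      · cases m <;> simp [encIdx] at hm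
      · simp at ha
      · simp at hab
    | N =>
      have m6 : (GTerm.succ (.var .N) : GTerm (NT n)) ∈ G.prods NT.N :=
        hRG.lambda_sub _ (by simp [lamProds])
      have hN : Gen G.prods (.var NT.N) (.succ (.clos β τ₀)) :=
        .var m6 (.succ (.var hmem hg'))
      obtain ⟨d, hdn, hde⟩ := hsub _ (gen_gclos hN hf)
      have hh := headOf_encT d
      rw [hde, headOf_gclos, headOf_succ] at hh
      rcases hh with ⟨m, hm⟩ | ⟨a, ha⟩ | ⟨a, b, hab⟩
      · cases m with
        | zero => simp [encIdx] at hm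
        | succ m =>
          simp only [encIdx, GTerm.succ.injEq] at hm
          cases m <;> simp [encIdx] at hm
      · simp at ha
      · simp at hab
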